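/- If f : [a,b] × [c,d] → ℝ is convex on the coordinates (convex in each variable separately), then f((a+b)/2, (c+d)/2) ≤ (1/((b-a)(d-c)))·∫ₐᵇ∫_c^d f(x,y) dy dx ≤ [f(a,c) + f(b,c) + f(a,d) + f(b,d)]/4. -/

import Mathlib

open MeasureTheory

/-- A convex function on a compact interval is integrable there. -/
lemma convexOn_integrableOn_aux {a b : ℝ} (hab : a < b) {g : ℝ → ℝ}
    (hg : ConvexOn ℝ (Set.Icc a b) g) : IntegrableOn g (Set.Icc a b) := by
  set m : ℝ := (a + b) / 2 with hm
  set C : ℝ := max (g a) (g b) with hC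
  have hma : m ∈ Set.Icc a b := ⟨by simp only [hm]; linarith, by simp only [hm]; linarith⟩
  have hub : ∀ y ∈ Set.Icc a b, g y ≤ C := by
    intro y hy
    exact hg.le_on_segment (Set.left_mem_Icc.2 hab.le) (Set.right_mem_Icc.2 hab.le)
      (by rwa [segment_eq_Icc hab.le])
  have hlb : ∀ y ∈ Set.Icc a b, 2 * g m - C ≤ g y := by
    intro y hy
    have hy' : a + b - y ∈ Set.Icc a b := ⟨by linarith [hy.2], by linarith [hy.1]⟩
    have h2 := hg.2 hy hy' (by norm_num : (0:ℝ) ≤ 1/2)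
      (by norm_num : (0:ℝ) ≤ 1/2) (by norm_num)
    simp only [smul_eq_mul] at h2
    have hmid : (1/2 : ℝ) * y + (1/2 : ℝ) * (a + b - y) = m := by
      rw [hm]; ring
    rw [hmid] at h2
    have := hub _ hy'
    linarith
  rw [integrableOn_Icc_iff_integrableOn_Ioo]
  have hmeas : AEStronglyMeasurable g (volume.restrict (Set.Ioo a b)) := by
    have : ContinuousOn g (Set.Ioo a b) := by
      have := hg.continuousOn_interior
      rwa [interior_Icc] at this
    exact (this.aemeasurable measurableSet_Ioo).aestronglyMeasurable
  have hboundint : IntegrableOn (fun _ : ℝ => |2 * g m - C| + |C|) (Set.Ioo a b) :=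
    integrableOn_const measure_Ioo_lt_top.ne
  refine hboundint.mono' hmeas ?_
  filter_upwards [ae_restrict_mem measurableSet_Ioo] with y hy
  have h1 := hub y (Set.Ioo_subset_Icc_self hy)
  have h2 := hlb y (Set.Ioo_subset_Icc_self hy)
  rw [Real.norm_eq_abs, abs_le]
  constructor
  · have := neg_abs_le (2 * g m - C)
    have := abs_nonneg C
    linarith
  · have := le_abs_self C
    have := abs_nonneg (2 * g m - C)
    linarith

/-- Left Hermite–Hadamard inequality. -/
lemma hh_left_aux {a b : ℝ} (hab : a < b) {g : ℝ → ℝ}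
    (hg : ConvexOn ℝ (Set.Icc a b) g) (hint : IntegrableOn g (Set.Icc a b)) :
    g ((a + b) / 2) * (b - a) ≤ ∫ x in a..b, g x := by
  have hii : IntervalIntegrable g volume a b := by
    rw [intervalIntegrable_iff_integrableOn_Icc_of_le hab.le]; exact hint
  have hrefl : IntervalIntegrable (fun x => g (a + b - x)) volume a b := by
    have := (hii.comp_sub_left (a + b)).symm
    simpa using this
  have hkey : ∀ x ∈ Set.Icc a b, g ((a + b) / 2) ≤ (g x + g (a + b - x)) / 2 := by
    intro x hx
    have hx' : a + b - x ∈ Set.Icc a b := ⟨by linarith [hx.2], by linarith [hx.1]⟩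
    have h2 := hg.2 hx hx' (by norm_num : (0:ℝ) ≤ 1/2)
      (by norm_num : (0:ℝ) ≤ 1/2) (by norm_num)
    simp only [smul_eq_mul] at h2
    have hmid : (1/2 : ℝ) * x + (1/2 : ℝ) * (a + b - x) = (a + b) / 2 := by ring
    rw [hmid] at h2
    linarith
  have hmono : ∫ _x in a..b, g ((a + b) / 2) ≤ ∫ x in a..b, (g x + g (a + b - x)) / 2 :=
    intervalIntegral.integral_mono_on hab.le intervalIntegrable_const
      ((hii.add hrefl).div_const 2) hkey
  have hconst : ∫ _x in a..b, g ((a + b) / 2) = g ((a + b) / 2) * (b - a) := by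
    rw [intervalIntegral.integral_const, smul_eq_mul]; ring
  have hreflval : (∫ x in a..b, g (a + b - x)) = ∫ x in a..b, g x := by
    rw [intervalIntegral.integral_comp_sub_left g (a + b)]
    norm_num
  have hsplit : ∫ x in a..b, (g x + g (a + b - x)) / 2
      = ((∫ x in a..b, g x) + ∫ x in a..b, g (a + b - x)) / 2 := by
    rw [intervalIntegral.integral_div, intervalIntegral.integral_add hii hrefl]
  rw [hconst, hsplit, hreflval] at hmono
  linarith

/-- Right Hermite–Hadamard inequality. -/
lemma hh_right_aux {a b : ℝ} (hab : a < b) {g : ℝ → ℝ}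
    (hg : ConvexOn ℝ (Set.Icc a b) g) (hint : IntegrableOn g (Set.Icc a b)) :
    (∫ x in a..b, g x) ≤ (g a + g b) / 2 * (b - a) := by
  have hii : IntervalIntegrable g volume a b := by
    rw [intervalIntegrable_iff_integrableOn_Icc_of_le hab.le]; exact hint
  have hba : (0:ℝ) < b - a := by linarith
  have hkey : ∀ x ∈ Set.Icc a b,
      g x ≤ (b * g a - a * g b) / (b - a) + (g b - g a) / (b - a) * x := by
    intro x hx
    set t : ℝ := (b - x) / (b - a) with ht
    have ht0 : 0 ≤ t := div_nonneg (by linarith [hx.2]) hba.le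
    have ht1 : 0 ≤ 1 - t := by
      have : t ≤ 1 := by
        rw [ht, div_le_one hba]; linarith [hx.1]
      linarith
    have h2 := hg.2 (Set.left_mem_Icc.2 hab.le) (Set.right_mem_Icc.2 hab.le) ht0 ht1
      (by ring)
    have hpt : t • a + (1 - t) • b = x := by
      simp only [smul_eq_mul, ht]; field_simp; ring
    rw [hpt] at h2
    have heq : t * g a + (1 - t) * g b
        = (b * g a - a * g b) / (b - a) + (g b - g a) / (b - a) * x := by
      simp only [ht]; field_simp; ring
    simp only [smul_eq_mul] at h2
    linarith [heq ▸ h2]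
  have hRHSint : IntervalIntegrable
      (fun x => (b * g a - a * g b) / (b - a) + (g b - g a) / (b - a) * x) volume a b :=
    intervalIntegrable_const.add ((intervalIntegral.intervalIntegrable_id).const_mul _)
  have hmono := intervalIntegral.integral_mono_on hab.le hii hRHSint hkey
  have hval : (∫ x in a..b, ((b * g a - a * g b) / (b - a) + (g b - g a) / (b - a) * x))
      = (g a + g b) / 2 * (b - a) := by
    rw [intervalIntegral.integral_add intervalIntegrable_const
      ((intervalIntegral.intervalIntegrable_id).const_mul _), intervalIntegral.integral_const,
      intervalIntegral.integral_const_mul, integral_id, smul_eq_mul]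
    field_simp
    ring
  linarith [hval ▸ hmono]

theorem coordinate_convex_hadamard (a b c d : ℝ) (hab : a < b) (hcd : c < d)
    (f : ℝ → ℝ → ℝ)
    (hint : IntegrableOn (fun z : ℝ × ℝ => f z.1 z.2) (Set.Icc a b ×ˢ Set.Icc c d))
    (hconv₁ : ∀ y ∈ Set.Icc c d, ConvexOn ℝ (Set.Icc a b) (fun x => f x y))
    (hconv₂ : ∀ x ∈ Set.Icc a b, ConvexOn ℝ (Set.Icc c d) (fun y => f x y)) :
    f ((a + b) / 2) ((c + d) / 2)
        ≤ (1 / ((b - a) * (d - c))) * ∫ x in a..b, ∫ y in c..d, f x y ∧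
    (1 / ((b - a) * (d - c))) * (∫ x in a..b, ∫ y in c..d, f x y)
        ≤ (f a c + f b c + f a d + f b d) / 4 := by
  have hba : (0:ℝ) < b - a := by linarith
  have hdc : (0:ℝ) < d - c := by linarith
  have hP : (0:ℝ) < (b - a) * (d - c) := mul_pos hba hdc
  set m₁ : ℝ := (a + b) / 2 with hm₁
  set m₂ : ℝ := (c + d) / 2 with hm₂
  have hm₁mem : m₁ ∈ Set.Icc a b := ⟨by rw [hm₁]; linarith, by rw [hm₁]; linarith⟩
  have hm₂mem : m₂ ∈ Set.Icc c d := ⟨by rw [hm₂]; linarith, by rw [hm₂]; linarith⟩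
  have hcmem : c ∈ Set.Icc c d := Set.left_mem_Icc.2 hcd.le
  have hdmem : d ∈ Set.Icc c d := Set.right_mem_Icc.2 hcd.le
  -- integrability in each slice
  have hIy : ∀ x ∈ Set.Icc a b, IntegrableOn (fun y => f x y) (Set.Icc c d) :=
    fun x hx => convexOn_integrableOn_aux hcd (hconv₂ x hx)
  have hIx : ∀ y ∈ Set.Icc c d, IntegrableOn (fun x => f x y) (Set.Icc a b) :=
    fun y hy => convexOn_integrableOn_aux hab (hconv₁ y hy)
  set F : ℝ → ℝ := fun x => ∫ y in c..d, f x y with hF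
  -- F is integrable on [a,b]
  have hFint : IntegrableOn F (Set.Icc a b) := by
    have h1 : Integrable (fun z : ℝ × ℝ => f z.1 z.2)
        ((volume.restrict (Set.Icc a b)).prod (volume.restrict (Set.Icc c d))) := by
      rw [Measure.prod_restrict, ← Measure.volume_eq_prod]
      exact hint
    have h2 := h1.integral_prod_left
    have heq : F = fun x => ∫ y, f x y ∂(volume.restrict (Set.Icc c d)) := by
      funext x
      show (∫ y in c..d, f x y) = _
      rw [intervalIntegral.integral_of_le hcd.le, ← integral_Icc_eq_integral_Ioc]
    rw [heq]
    exact h2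
  have hFii : IntervalIntegrable F volume a b := by
    rw [intervalIntegrable_iff_integrableOn_Icc_of_le hab.le]; exact hFint
  have hIxii : ∀ y ∈ Set.Icc c d, IntervalIntegrable (fun x => f x y) volume a b := by
    intro y hy
    rw [intervalIntegrable_iff_integrableOn_Icc_of_le hab.le]; exact hIx y hy
  constructor
  · -- left inequality
    have h1 : ∀ x ∈ Set.Icc a b, f x m₂ * (d - c) ≤ F x :=
      fun x hx => hh_left_aux hcd (hconv₂ x hx) (hIy x hx)
    have h2 : (∫ x in a..b, f x m₂ * (d - c)) ≤ ∫ x in a..b, F x :=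
      intervalIntegral.integral_mono_on hab.le
        ((hIxii m₂ hm₂mem).mul_const _) hFii h1
    have h2' : (∫ x in a..b, f x m₂ * (d - c)) = (∫ x in a..b, f x m₂) * (d - c) :=
      intervalIntegral.integral_mul_const _ _
    have h3 : f m₁ m₂ * (b - a) ≤ ∫ x in a..b, f x m₂ :=
      hh_left_aux hab (hconv₁ m₂ hm₂mem) (hIx m₂ hm₂mem)
    have h4 := mul_le_mul_of_nonneg_right h3 hdc.le
    rw [one_div, inv_mul_eq_div, le_div_iff₀ hP]
    calc f m₁ m₂ * ((b - a) * (d - c)) = f m₁ m₂ * (b - a) * (d - c) := by ring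
      _ ≤ (∫ x in a..b, f x m₂) * (d - c) := h4
      _ ≤ ∫ x in a..b, F x := by rw [← h2']; exact h2
  · -- right inequality
    have g1 : ∀ x ∈ Set.Icc a b, F x ≤ (f x c + f x d) / 2 * (d - c) :=
      fun x hx => hh_right_aux hcd (hconv₂ x hx) (hIy x hx)
    have g2 : (∫ x in a..b, F x) ≤ ∫ x in a..b, (f x c + f x d) / 2 * (d - c) :=
      intervalIntegral.integral_mono_on hab.le hFii
        ((((hIxii c hcmem).add (hIxii d hdmem)).div_const 2).mul_const _) g1
    have g2' : (∫ x in a..b, (f x c + f x d) / 2 * (d - c))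
        = ((∫ x in a..b, f x c) + ∫ x in a..b, f x d) / 2 * (d - c) := by
      rw [intervalIntegral.integral_mul_const, intervalIntegral.integral_div,
        intervalIntegral.integral_add (hIxii c hcmem) (hIxii d hdmem)]
    have g3 : (∫ x in a..b, f x c) ≤ (f a c + f b c) / 2 * (b - a) :=
      hh_right_aux hab (hconv₁ c hcmem) (hIx c hcmem)
    have g4 : (∫ x in a..b, f x d) ≤ (f a d + f b d) / 2 * (b - a) :=
      hh_right_aux hab (hconv₁ d hdmem) (hIx d hdmem)
    rw [one_div, inv_mul_eq_div, div_le_iff₀ hP]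
    calc (∫ x in a..b, F x)
        ≤ ((∫ x in a..b, f x c) + ∫ x in a..b, f x d) / 2 * (d - c) := by
          rw [← g2']; exact g2
      _ ≤ ((f a c + f b c) / 2 * (b - a) + (f a d + f b d) / 2 * (b - a)) / 2 * (d - c) := by
          gcongr
      _ = (f a c + f b c + f a d + f b d) / 4 * ((b - a) * (d - c)) := by ring
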